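/- Let N be a weakly S-primary submodule of an R-module M and K a submodule of M such that (K :_R M)M = K and (K :_R M) ∩ S ≠ ∅. Then N ∩ K is a weakly S-primary submodule of M. -/

import Mathlib

open Submodule

/-- `N` is a weakly `S`-primary submodule of `M`. -/
def IsWeaklySPrimary {R : Type*} [CommRing R] {M : Type*} [AddCommGroup M] [Module R M]
    (S : Set R) (N : Submodule R M) : Prop :=
  ((N.colon ⊤ : Ideal R) : Set R) ∩ S = ∅ ∧
    ∃ s ∈ S, ∀ (a : R) (m : M), a • m ≠ 0 → a • m ∈ N →
      s * a ∈ (N.colon ⊤ : Ideal R).radical ∨ s • m ∈ N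

/-- `N` is an `S`-primary submodule of `M`. -/
def IsSPrimary {R : Type*} [CommRing R] {M : Type*} [AddCommGroup M] [Module R M]
    (S : Set R) (N : Submodule R M) : Prop :=
  ((N.colon ⊤ : Ideal R) : Set R) ∩ S = ∅ ∧
    ∃ s ∈ S, ∀ (a : R) (m : M), a • m ∈ N →
      s * a ∈ (N.colon ⊤ : Ideal R).radical ∨ s • m ∈ N

/-- `N` is a weakly primary (proper) submodule of `M`. -/
def IsWeaklyPrimary {R : Type*} [CommRing R] {M : Type*} [AddCommGroup M] [Module R M]
    (N : Submodule R M) : Prop :=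
  N ≠ ⊤ ∧ ∀ (a : R) (m : M), a • m ≠ 0 → a • m ∈ N →
      a ∈ (N.colon ⊤ : Ideal R).radical ∨ m ∈ N

/-- `I` is a weakly `S`-primary ideal of `R`. -/
def IsWeaklySPrimaryIdeal {R : Type*} [CommRing R] (S : Set R) (I : Ideal R) : Prop :=
  (I : Set R) ∩ S = ∅ ∧
    ∃ s ∈ S, ∀ a b : R, a * b ≠ 0 → a * b ∈ I → s * a ∈ I.radical ∨ s * b ∈ I

theorem stmt17 {R : Type*} [CommRing R] {M : Type*} [AddCommGroup M] [Module R M]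
    (S : Set R) (hS : ∀ x ∈ S, ∀ y ∈ S, x * y ∈ S)
    (N : Submodule R M) (hN : IsWeaklySPrimary S N)
    (K : Submodule R M)
    (hK1 : (K.colon ⊤ : Ideal R) • (⊤ : Submodule R M) = K)
    (hK2 : (((K.colon ⊤ : Ideal R) : Set R) ∩ S).Nonempty) :
    IsWeaklySPrimary S (N ⊓ K) := by
  obtain ⟨t, htK, htS⟩ := hK2
  obtain ⟨hdisj, s, hsS, hs⟩ := hN
  have hcolon : ((N ⊓ K).colon ⊤ : Ideal R) = (N.colon ⊤ : Ideal R) ⊓ (K.colon ⊤ : Ideal R) := by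
    ext r
    simp only [Submodule.mem_colon, Submodule.mem_inf, Ideal.mem_inf]
    exact ⟨fun h => ⟨fun p hp => (h p hp).1, fun p hp => (h p hp).2⟩,
      fun h p hp => ⟨h.1 p hp, h.2 p hp⟩⟩
  constructor
  · rw [Set.eq_empty_iff_forall_notMem]
    rintro x ⟨hx1, hx2⟩
    rw [Set.eq_empty_iff_forall_notMem] at hdisj
    exact hdisj x ⟨(by rw [hcolon] at hx1; exact hx1.1), hx2⟩
  · refine ⟨s * t, hS s hsS t htS, fun a m hne hm => ?_⟩
    rcases hs a m hne hm.1 with h | h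
    · left
      rw [hcolon, Ideal.radical_inf]
      refine ⟨?_, ?_⟩
      · have : t * (s * a) ∈ (N.colon ⊤ : Ideal R).radical := Ideal.mul_mem_left _ t h
        rw [show s * t * a = t * (s * a) by ring]; exact this
      · refine Ideal.le_radical ?_
        have h2 := Ideal.mul_mem_left _ s (Ideal.mul_mem_right a _ htK)
        rwa [← mul_assoc] at h2
    · right
      refine ⟨?_, ?_⟩
      · show (s * t) • m ∈ N
        rw [mul_comm, mul_smul]
        exact N.smul_mem t h
      · show (s * t) • m ∈ K
        rw [mul_smul]
        exact K.smul_mem s (Submodule.mem_colon.mp htK m trivial)
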